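/- (Basis selection lemma.) Let N := dim(E_0) and suppose the datum (c,d,B) satisfies the scaling condition and Σ_{j=1}^m d_j dim(B_j T) ≥ Σ_{i=1}^k c_i dim(π_{E_i}T) for all product-form subspaces T ⊆ E_0 (in particular each B_j is surjective). Then there exists a real number c > 0 such that for every orthonormal basis (e_n)_{1≤n≤N} of E_0 with the property that each e_n lies in some E_i, there exist sets I_j ⊆ {1,…,N} with |I_j| = dim(E^j) for each 1≤j≤m such that, with S_i := {n : e_n ∈ E_i}: (a) Σ_{j=1}^m d_j |I_j ∩ {n+1,…,N}| ≥ Σ_{i=1}^k c_i |S_i ∩ {n+1,…,N}| for all 0 ≤ n ≤ N, and (b) ‖⋀_{n∈I_j} B_j e_n‖ ≥ c for all 1≤j≤m, the norm being that of the top exterior power of E^j. Moreover, if the datum has no critical subspace, then there is δ > 0 depending only on (c,d,B) such that (a) improves to Σ_{j=1}^m d_j |I_j ∩ {n+1,…,N}| ≥ Σ_{i=1}^k c_i |S_i ∩ {n+1,…,N}| + δ for all 0 < n < N. -/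

import Mathlib

open MeasureTheory LinearMap
open scoped RealInnerProductSpace BigOperators NNReal ENNReal

noncomputable section

namespace FRBL

/-- A positive semidefinite (self-adjoint) operator on a real inner product space. -/
def PosSemidef {G : Type*} [NormedAddCommGroup G] [InnerProductSpace ℝ G]
    (A : G →ₗ[ℝ] G) : Prop :=
  A.IsSymmetric ∧ ∀ x : G, 0 ≤ ⟪A x, x⟫

/-- A positive definite (self-adjoint) operator on a real inner product space. -/
def PosDef {G : Type*} [NormedAddCommGroup G] [InnerProductSpace ℝ G]
    (A : G →ₗ[ℝ] G) : Prop :=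
  A.IsSymmetric ∧ ∀ x : G, x ≠ 0 → 0 < ⟪A x, x⟫

variable {k m : ℕ}
  (E : Fin k → Type*) (F : Fin m → Type*)
  [∀ i, NormedAddCommGroup (E i)] [∀ i, InnerProductSpace ℝ (E i)]
  [∀ i, FiniteDimensional ℝ (E i)]
  [∀ i, MeasurableSpace (E i)] [∀ i, BorelSpace (E i)]
  [∀ j, NormedAddCommGroup (F j)] [∀ j, InnerProductSpace ℝ (F j)]
  [∀ j, FiniteDimensional ℝ (F j)]
  [∀ j, MeasurableSpace (F j)] [∀ j, BorelSpace (F j)]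
  (c : Fin k → ℝ) (d : Fin m → ℝ)
  (B : ∀ i j, E i →ₗ[ℝ] F j)

/-- The pointwise domination hypothesis of the forward-reverse Brascamp-Lieb inequality. -/
def Hyp (f : ∀ i, E i → ℝ≥0) (g : ∀ j, F j → ℝ≥0) : Prop :=
  ∀ x : ∀ i, E i,
    (∏ i, f i (x i) ^ c i) ≤ ∏ j, g j (∑ i, c i • B i j (x i)) ^ d j

/-- `D₀` is an admissible constant for the forward-reverse Brascamp-Lieb inequality. -/
def IsBound (D₀ : ℝ) : Prop :=
  ∀ (f : ∀ i, E i → ℝ≥0) (g : ∀ j, F j → ℝ≥0),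
    (∀ i, Measurable (f i)) → (∀ j, Measurable (g j)) →
    Hyp E F c d B f g →
    (∏ i, (∫⁻ x, (f i x : ℝ≥0∞)) ^ c i) ≤
      ENNReal.ofReal (Real.exp D₀) * ∏ j, (∫⁻ y, (g j y : ℝ≥0∞)) ^ d j

/-- The best constant `D(c,d,B)` in the forward-reverse Brascamp-Lieb inequality. -/
def D : EReal :=
  sInf {x : EReal | ∃ D₀ : ℝ, x = (D₀ : EReal) ∧ IsBound E F c d B D₀}

/-- The gaussian constraint `Λ_c B* U_d B Λ_c ≤ V_c`, written via quadratic forms. -/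
def GaussCon (V : ∀ i, E i →ₗ[ℝ] E i) (U : ∀ j, F j →ₗ[ℝ] F j) : Prop :=
  ∀ x : ∀ i, E i,
    (∑ j, d j * ⟪U j (∑ i, c i • B i j (x i)), ∑ i, c i • B i j (x i)⟫) ≤
      ∑ i, c i * ⟪V i (x i), x i⟫

/-- The objective functional in the definition of the gaussian constant. -/
def gaussObj (V : ∀ i, E i →ₗ[ℝ] E i) (U : ∀ j, F j →ₗ[ℝ] F j) : ℝ :=
  (∑ j, d j * Real.log (LinearMap.det (U j)) -
    ∑ i, c i * Real.log (LinearMap.det (V i))) / 2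

/-- The gaussian best constant `D_g(c,d,B)`. -/
def Dg : EReal :=
  sSup {x : EReal | ∃ (V : ∀ i, E i →ₗ[ℝ] E i) (U : ∀ j, F j →ₗ[ℝ] F j),
    (∀ i, PosDef (V i)) ∧ (∀ j, PosDef (U j)) ∧ GaussCon E F c d B V U ∧
    x = (gaussObj E F c d V U : EReal)}

/-- The datum `(c,d,B)` is gaussian-extremizable: the supremum defining `D_g` is
finite and attained. -/
def GaussExt : Prop :=
  ∃ (V : ∀ i, E i →ₗ[ℝ] E i) (U : ∀ j, F j →ₗ[ℝ] F j),
    (∀ i, PosDef (V i)) ∧ (∀ j, PosDef (U j)) ∧ GaussCon E F c d B V U ∧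
    Dg E F c d B = (gaussObj E F c d V U : EReal)

/-- The canonical linear equivalence between `E₀ = ⊕ᵢ Eᵢ` (as `PiLp 2`) and the pi type. -/
def toPi : PiLp 2 E ≃ₗ[ℝ] ∀ i, E i := WithLp.linearEquiv 2 ℝ (∀ i, E i)

/-- Orthogonal projection `π_{E_i} : E₀ → E_i`. -/
def projL (i : Fin k) : PiLp 2 E →ₗ[ℝ] E i := (LinearMap.proj i).comp (toPi E).toLinearMap

/-- The embedding `E_i → E₀`. -/
def singleL (i : Fin k) : E i →ₗ[ℝ] PiLp 2 E :=
  (toPi E).symm.toLinearMap.comp (LinearMap.single ℝ E i)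

/-- The map `B_j : E₀ → E^j`, `x ↦ ∑ᵢ B_{ij} π_{E_i} x`. -/
def Bop (j : Fin m) : PiLp 2 E →ₗ[ℝ] F j := ∑ i, (B i j).comp (projL E i)

/-- `Λ_c = ⊕ᵢ cᵢ id_{E_i}` as an operator on `E₀`. -/
def Lam : PiLp 2 E →ₗ[ℝ] PiLp 2 E := ∑ i, c i • (singleL E i).comp (projL E i)

/-- The set `Π(A_1, …, A_k)` of positive semidefinite "couplings". -/
def Coupling (A : ∀ i, E i →ₗ[ℝ] E i) : Set (PiLp 2 E →ₗ[ℝ] PiLp 2 E) :=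
  {P | PosSemidef P ∧ ∀ (i : Fin k) (v : E i),
    ⟪P (singleL E i v), singleL E i v⟫ = ⟪A i v, v⟫}

/-- The scaling condition `∑ᵢ cᵢ dim Eᵢ = ∑ⱼ dⱼ dim E^j`. -/
def ScalingCond : Prop :=
  ∑ i, c i * (Module.finrank ℝ (E i) : ℝ) = ∑ j, d j * (Module.finrank ℝ (F j) : ℝ)

/-- A subspace `T ⊆ E₀` is of product form, i.e. `T = ⊕ᵢ π_{E_i} T`. -/
def ProductForm (T : Submodule ℝ (PiLp 2 E)) : Prop :=
  ∀ x ∈ T, ∀ i, singleL E i (projL E i x) ∈ T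

/-- The dimension condition over product-form subspaces. -/
def DimCond : Prop :=
  ∀ T : Submodule ℝ (PiLp 2 E), ProductForm E T →
    (∑ i, c i * (Module.finrank ℝ (T.map (projL E i)) : ℝ)) ≤
      ∑ j, d j * (Module.finrank ℝ (T.map (Bop E F B j)) : ℝ)

/-- A critical subspace. -/
def IsCritical (T : Submodule ℝ (PiLp 2 E)) : Prop :=
  T ≠ ⊥ ∧ T ≠ ⊤ ∧ ProductForm E T ∧
    ∑ i, c i * (Module.finrank ℝ (T.map (projL E i)) : ℝ) =
      ∑ j, d j * (Module.finrank ℝ (T.map (Bop E F B j)) : ℝ)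

/-- The datum is simple if it has no critical subspace. -/
def Simple : Prop := ∀ T : Submodule ℝ (PiLp 2 E), ¬ IsCritical E F c d B T

end FRBL

namespace FRBL

/-- `log det` with value `−∞` on operators with non-positive determinant
(in particular on singular positive-semidefinite operators). -/
def elogdet {G : Type*} [AddCommGroup G] [Module ℝ G] (A : G →ₗ[ℝ] G) : EReal :=
  if 0 < LinearMap.det A then ((Real.log (LinearMap.det A) : ℝ) : EReal) else ⊥

variable {k m : ℕ}
  (E : Fin k → Type*) (F : Fin m → Type*)
  [∀ i, NormedAddCommGroup (E i)] [∀ i, InnerProductSpace ℝ (E i)]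
  [∀ i, FiniteDimensional ℝ (E i)]
  [∀ j, NormedAddCommGroup (F j)] [∀ j, InnerProductSpace ℝ (F j)]
  [∀ j, FiniteDimensional ℝ (F j)]
  (c : Fin k → ℝ) (d : Fin m → ℝ)
  (B : ∀ i j, E i →ₗ[ℝ] F j)

/-- The map `Q_j := B_j Λ_c : E₀ → E^j`. -/
def BLam (j : Fin m) : PiLp 2 E →ₗ[ℝ] F j := (Bop E F B j).comp (Lam E c)

/-- The optimality condition of Theorem 2 (structure of gaussian extremizers):
each `B_j Λ_c Π Λ_c B_j*` is invertible and
`∑ⱼ dⱼ Λ_c B_j* (B_j Λ_c Π Λ_c B_j*)⁻¹ B_j Λ_c ≤ V_c` in the quadratic-form sense. -/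
def ExtCond (V : ∀ i, E i →ₗ[ℝ] E i) (P : PiLp 2 E →ₗ[ℝ] PiLp 2 E) : Prop :=
  (∀ j, IsUnit ((BLam E F c B j) ∘ₗ P ∘ₗ LinearMap.adjoint (BLam E F c B j))) ∧
  ∀ x : PiLp 2 E,
    (∑ j, d j * ⟪Ring.inverse ((BLam E F c B j) ∘ₗ P ∘ₗ LinearMap.adjoint (BLam E F c B j))
        (BLam E F c B j x), BLam E F c B j x⟫) ≤
      ∑ i, c i * ⟪V i (projL E i x), projL E i x⟫

/-- A geometric datum. -/
def Geometric : Prop :=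
  ScalingCond E F c d ∧
  ∃ S ∈ Coupling E (fun i => (LinearMap.id : E i →ₗ[ℝ] E i)),
    (∀ j, (BLam E F c B j) ∘ₗ S ∘ₗ LinearMap.adjoint (BLam E F c B j) = LinearMap.id) ∧
    ∀ x : PiLp 2 E, (∑ j, d j * ⟪BLam E F c B j x, BLam E F c B j x⟫) ≤ ⟪Lam E c x, x⟫

/-- Equivalence of data: `B'_j = C_j⁻¹ B_j C⁻¹` for invertible `C, C_j`. -/
def EquivData (B' : ∀ i j, E i →ₗ[ℝ] F j) : Prop :=
  ∃ (C : PiLp 2 E ≃ₗ[ℝ] PiLp 2 E) (Cj : ∀ j, F j ≃ₗ[ℝ] F j),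
    ∀ j, Bop E F B' j =
      ((Cj j).symm.toLinearMap ∘ₗ Bop E F B j) ∘ₗ C.symm.toLinearMap

/-- `V_c = ⊕ᵢ cᵢ Vᵢ` as an operator on `E₀`. -/
def blockDiag (V : ∀ i, E i →ₗ[ℝ] E i) : PiLp 2 E →ₗ[ℝ] PiLp 2 E :=
  ∑ i, c i • ((singleL E i) ∘ₗ (V i)) ∘ₗ (projL E i)

/-- `Θ = V_c − ∑ⱼ dⱼ Λ_c B_j* U_j B_j Λ_c`. -/
def Theta (V : ∀ i, E i →ₗ[ℝ] E i) (U : ∀ j, F j →ₗ[ℝ] F j) :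
    PiLp 2 E →ₗ[ℝ] PiLp 2 E :=
  blockDiag E c V -
    ∑ j, d j • (LinearMap.adjoint (BLam E F c B j) ∘ₗ (U j)) ∘ₗ (BLam E F c B j)

end FRBL

namespace FRBL

/-- Borel structure on submodules (inherited from the ambient space). -/
instance subBorel {G : Type*} [AddCommGroup G] [Module ℝ G] [TopologicalSpace G]
    [MeasurableSpace G] [BorelSpace G] (T : Submodule ℝ G) : BorelSpace ↥T :=
  Subtype.borelSpace (T : Set G)

/-- The maximal dimension of a subspace on which the self-adjoint operator `Q` is positive
definite; by Sylvester's law of inertia this is the number of positive eigenvalues of `Q`,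
counted with multiplicity. -/
def posIndex {H : Type*} [NormedAddCommGroup H] [InnerProductSpace ℝ H]
    (Q : H →ₗ[ℝ] H) : ℕ :=
  sSup {r : ℕ | ∃ W : Submodule ℝ H,
    (∀ x ∈ W, x ≠ 0 → 0 < ⟪Q x, x⟫) ∧ Module.finrank ℝ W = r}

/-- The standard gaussian probability measure on a Euclidean space. -/
def stdGaussian (G : Type*) [NormedAddCommGroup G] [InnerProductSpace ℝ G]
    [FiniteDimensional ℝ G] [MeasurableSpace G] [BorelSpace G] :
    Measure G :=
  volume.withDensity fun x =>
    ENNReal.ofReal ((2 * Real.pi) ^ (-(Module.finrank ℝ G : ℝ) / 2) *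
      Real.exp (-‖x‖ ^ 2 / 2))

/-- `K_s = (|s|^{1/s} |s'|^{1/s'})^{1/2}`. -/
def Kconst (s s' : ℝ) : ℝ := Real.sqrt (|s| ^ (1 / s) * |s'| ^ (1 / s'))

variable {k m : ℕ}
  (E : Fin k → Type*) (F : Fin m → Type*)
  [∀ i, NormedAddCommGroup (E i)] [∀ i, InnerProductSpace ℝ (E i)]
  [∀ i, FiniteDimensional ℝ (E i)]
  [∀ j, NormedAddCommGroup (F j)] [∀ j, InnerProductSpace ℝ (F j)]
  [∀ j, FiniteDimensional ℝ (F j)]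
  (c : Fin k → ℝ) (d : Fin m → ℝ)
  (B : ∀ i j, E i →ₗ[ℝ] F j)

/-- The objective functional `∑ⱼ dⱼ log det Uⱼ − ∑ᵢ cᵢ log det Vᵢ`. -/
def objective (V : ∀ i, E i →ₗ[ℝ] E i) (U : ∀ j, F j →ₗ[ℝ] F j) : ℝ :=
  ∑ j, d j * Real.log (LinearMap.det (U j)) - ∑ i, c i * Real.log (LinearMap.det (V i))

/-- Feasibility for the optimization problem defining `D_g`: positive definiteness
together with the constraint `Θ ≥ 0`. -/
def Admissible (V : ∀ i, E i →ₗ[ℝ] E i) (U : ∀ j, F j →ₗ[ℝ] F j) : Prop :=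
  (∀ i, PosDef (V i)) ∧ (∀ j, PosDef (U j)) ∧ PosSemidef (Theta E F c d B V U)

/-- Global maximality in the optimization problem defining `D_g`. -/
def IsGlobalMax (V : ∀ i, E i →ₗ[ℝ] E i) (U : ∀ j, F j →ₗ[ℝ] F j) : Prop :=
  Admissible E F c d B V U ∧
    ∀ V' U', Admissible E F c d B V' U' →
      objective E F c d V' U' ≤ objective E F c d V U

/-- Local maximality in the optimization problem defining `D_g`. -/
def IsLocalMax (V : ∀ i, E i →ₗ[ℝ] E i) (U : ∀ j, F j →ₗ[ℝ] F j) : Prop :=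
  Admissible E F c d B V U ∧
    ∃ ε : ℝ, 0 < ε ∧
      ∀ V' U', Admissible E F c d B V' U' →
        (∀ i, ‖LinearMap.toContinuousLinearMap (V' i - V i)‖ < ε) →
        (∀ j, ‖LinearMap.toContinuousLinearMap (U' j - U j)‖ < ε) →
        objective E F c d V' U' ≤ objective E F c d V U

end FRBL


namespace FRBLaux

open Submodule Set



open Classical in
/-- Greedy selection: indices whose vector is not in the span of strictly later ones. -/
def gsel {N : ℕ} {G : Type*} [AddCommGroup G] [Module ℝ G] (w : Fin N → G) : Finset (Fin N) :=
  Finset.univ.filter (fun a => w a ∉ Submodule.span ℝ (w '' {b | (a : ℕ) < (b : ℕ)}))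

lemma mem_gsel_iff {N : ℕ} {G : Type*} [AddCommGroup G] [Module ℝ G] (w : Fin N → G)
    (a : Fin N) : a ∈ gsel w ↔ w a ∉ Submodule.span ℝ (w '' {b | (a : ℕ) < (b : ℕ)}) := by
  simp [gsel]

lemma gsel_span {N : ℕ} {G : Type*} [AddCommGroup G] [Module ℝ G] (w : Fin N → G) (n : ℕ) :
    Submodule.span ℝ (w '' {a | n ≤ (a : ℕ) ∧ a ∈ gsel w}) =
      Submodule.span ℝ (w '' {a | n ≤ (a : ℕ)}) := by
  suffices H : ∀ t n : ℕ, N ≤ n + t →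
      Submodule.span ℝ (w '' {a | n ≤ (a : ℕ) ∧ a ∈ gsel w}) =
        Submodule.span ℝ (w '' {a | n ≤ (a : ℕ)}) from H N n (by omega)
  intro t
  induction t with
  | zero =>
    intro n hn
    have h1 : {a : Fin N | n ≤ (a : ℕ)} = ∅ := by
      ext a
      simp only [Set.mem_setOf_eq, Set.mem_empty_iff_false, iff_false]
      intro h; exact absurd a.isLt (by omega)
    have h2 : {a : Fin N | n ≤ (a : ℕ) ∧ a ∈ gsel w} = ∅ := by
      ext a; simp only [Set.mem_setOf_eq, Set.mem_empty_iff_false, iff_false, not_and]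
      intro h; exact absurd a.isLt (by omega)
    rw [h1, h2]
  | succ t IH =>
    intro n hn
    by_cases hN : N ≤ n + t
    · exact IH n hN
    have hnN : n < N := by omega
    set an : Fin N := ⟨n, hnN⟩ with han
    have hval : (an : ℕ) = n := rfl
    have heqiff : ∀ a : Fin N, a = an ↔ (a : ℕ) = n := by
      intro a
      constructor
      · intro h; rw [h, hval]
      · intro h; exact Fin.ext (by rw [h, hval])
    have hset : {a : Fin N | n ≤ (a : ℕ)} = insert an {a : Fin N | n + 1 ≤ (a : ℕ)} := by
      ext a
      simp only [Set.mem_setOf_eq, Set.mem_insert_iff, heqiff a]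
      omega
    have IH' := IH (n + 1) (by omega)
    by_cases hsel : an ∈ gsel w
    · have hset2 : {a : Fin N | n ≤ (a : ℕ) ∧ a ∈ gsel w} =
          insert an {a : Fin N | n + 1 ≤ (a : ℕ) ∧ a ∈ gsel w} := by
        ext a
        simp only [Set.mem_setOf_eq, Set.mem_insert_iff, heqiff a]
        constructor
        · rintro ⟨h1, h2⟩
          rcases Nat.eq_or_lt_of_le h1 with h | h
          · exact Or.inl h.symm
          · exact Or.inr ⟨by omega, h2⟩
        · rintro (h | ⟨h1, h2⟩)
          · exact ⟨by omega, by rwa [show a = an from (heqiff a).2 h]⟩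
          · exact ⟨by omega, h2⟩
      rw [hset, hset2, Set.image_insert_eq, Set.image_insert_eq, Submodule.span_insert,
        Submodule.span_insert, IH']
    · have hmem : w an ∈ Submodule.span ℝ (w '' {b : Fin N | n + 1 ≤ (b : ℕ)}) := by
        have h0 : w an ∈ Submodule.span ℝ (w '' {b | (an : ℕ) < (b : ℕ)}) := by
          by_contra h; exact hsel ((mem_gsel_iff w an).2 h)
        have : {b : Fin N | (an : ℕ) < (b : ℕ)} = {b : Fin N | n + 1 ≤ (b : ℕ)} := by
          ext b; simp only [Set.mem_setOf_eq, hval]; omega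
        rwa [this] at h0
      have hset2 : {a : Fin N | n ≤ (a : ℕ) ∧ a ∈ gsel w} =
          {a : Fin N | n + 1 ≤ (a : ℕ) ∧ a ∈ gsel w} := by
        ext a
        simp only [Set.mem_setOf_eq]
        constructor
        · rintro ⟨h1, h2⟩
          rcases Nat.eq_or_lt_of_le h1 with h | h
          · exact absurd h2 (by rwa [show a = an from (heqiff a).2 h.symm])
          · exact ⟨by omega, h2⟩
        · rintro ⟨h1, h2⟩; exact ⟨by omega, h2⟩
      rw [hset, hset2, Set.image_insert_eq, Submodule.span_insert_eq_span hmem, IH']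

lemma gsel_indep {N : ℕ} {G : Type*} [AddCommGroup G] [Module ℝ G] (w : Fin N → G)
    (s : Finset (Fin N))
    (hs : ∀ a ∈ s, w a ∉ Submodule.span ℝ (w '' {b | (a : ℕ) < (b : ℕ)})) :
    LinearIndependent ℝ (fun a : ↥s => w ↑a) := by
  classical
  rw [linearIndependent_iff']
  intro t g hsum a ha
  by_contra hg
  set t' : Finset ↥s := t.filter (fun x => g x ≠ 0) with ht'
  have hane : t'.Nonempty := ⟨a, Finset.mem_filter.2 ⟨ha, hg⟩⟩
  set a₀ : ↥s := t'.min' hane with ha₀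
  have ha₀t' : a₀ ∈ t' := t'.min'_mem hane
  have hg₀ : g a₀ ≠ 0 := (Finset.mem_filter.1 ha₀t').2
  have hsum' : ∑ x ∈ t', g x • w ↑x = 0 := by
    rw [ht', Finset.sum_filter_of_ne]
    · exact hsum
    · intro x hx hgx h0
      rw [h0, zero_smul] at hgx
      exact hgx rfl
  have hsplit : g a₀ • w ↑a₀ + ∑ x ∈ t'.erase a₀, g x • w ↑x = 0 :=
    (Finset.add_sum_erase t' (fun x => g x • w ↑x) ha₀t').trans hsum'
  have hwa : w ↑a₀ = (-(g a₀)⁻¹) • ∑ x ∈ t'.erase a₀, g x • w ↑x := by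
    have : g a₀ • w ↑a₀ = -∑ x ∈ t'.erase a₀, g x • w ↑x := by linear_combination (norm := module) hsplit
    calc w ↑a₀ = (g a₀)⁻¹ • (g a₀ • w ↑a₀) := by rw [smul_smul, inv_mul_cancel₀ hg₀, one_smul]
    _ = (-(g a₀)⁻¹) • ∑ x ∈ t'.erase a₀, g x • w ↑x := by rw [this]; module
  have hmem : w ↑a₀ ∈ Submodule.span ℝ (w '' {b | ((a₀ : Fin N) : ℕ) < (b : ℕ)}) := by
    rw [hwa]
    refine Submodule.smul_mem _ _ (Submodule.sum_mem _ ?_)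
    intro x hx
    refine Submodule.smul_mem _ _ (Submodule.subset_span ?_)
    refine ⟨↑x, ?_, rfl⟩
    have hxx : a₀ ≤ x := t'.min'_le x (Finset.mem_of_mem_erase hx)
    have hne : a₀ ≠ x := (Finset.ne_of_mem_erase hx).symm
    have : a₀ < x := lt_of_le_of_ne hxx hne
    exact this
  exact hs ↑a₀ a₀.2 hmem


open Submodule Set Matrix
open scoped RealInnerProductSpace


lemma gram_lemma {G : Type*} [NormedAddCommGroup G] [InnerProductSpace ℝ G]
    [FiniteDimensional ℝ G] {J : Type*} [Fintype J] [DecidableEq J] (w : J → G)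
    (hcard : Fintype.card J = Module.finrank ℝ G) :
    0 ≤ Matrix.det (Matrix.of fun a b => ⟪w a, w b⟫) ∧
      (LinearIndependent ℝ w → 0 < Matrix.det (Matrix.of fun a b => ⟪w a, w b⟫)) := by
  classical
  have eqv : Fin (Module.finrank ℝ G) ≃ J := (Fintype.equivFinOfCardEq hcard).symm
  set f := (stdOrthonormalBasis ℝ G).reindex eqv with hf
  set b := f.toBasis with hb
  set A := b.toMatrix w with hA
  have hGram : (Matrix.of fun a b' => (⟪w a, w b'⟫ : ℝ)) = Aᵀ * A := by
    ext a b'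
    rw [Matrix.mul_apply, Matrix.of_apply]
    rw [← OrthonormalBasis.sum_inner_mul_inner f (w a) (w b')]
    congr 1
    ext p
    have h1 : A p a = ⟪f p, w a⟫ := by
      rw [hA, Module.Basis.toMatrix_apply, hb, OrthonormalBasis.coe_toBasis_repr_apply,
        OrthonormalBasis.repr_apply_apply, real_inner_comm]
    have h2 : A p b' = ⟪f p, w b'⟫ := by
      rw [hA, Module.Basis.toMatrix_apply, hb, OrthonormalBasis.coe_toBasis_repr_apply,
        OrthonormalBasis.repr_apply_apply, real_inner_comm]
    rw [Matrix.transpose_apply, h1, h2, real_inner_comm (w a) (f p)]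
  have hdet : Matrix.det (Matrix.of fun a b' => (⟪w a, w b'⟫ : ℝ)) = (A.det) ^ 2 := by
    rw [hGram, Matrix.det_mul, Matrix.det_transpose, sq]
  constructor
  · rw [hdet]; positivity
  · intro hli
    rw [hdet]
    have hspan : Submodule.span ℝ (Set.range w) = ⊤ := by
      cases isEmpty_or_nonempty J with
      | inl h =>
        have h0 : Module.finrank ℝ G = 0 := by rw [← hcard]; simp
        have : Subsingleton G := Module.finrank_zero_iff.1 h0
        exact Subsingleton.elim _ _
      | inr h => exact hli.span_eq_top_of_card_eq_finrank hcard
    have hunit : IsUnit (b.det w) := (Module.Basis.is_basis_iff_det b).1 ⟨hli, hspan⟩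
    have hne : A.det ≠ 0 := by
      rw [hA, ← Module.Basis.det_apply]
      exact hunit.ne_zero
    positivity


lemma cont_sup' {α X : Type*} [TopologicalSpace X] (s : Finset α) (hs : s.Nonempty)
    (f : α → X → ℝ) (hf : ∀ a ∈ s, Continuous (f a)) :
    Continuous fun x => s.sup' hs (fun a => f a x) := by
  induction hs using Finset.Nonempty.cons_induction with
  | singleton a => simpa using hf a (Finset.mem_singleton_self a)
  | cons a s h hs ih =>
    have heq : (fun x => (Finset.cons a s h).sup' (Finset.cons_nonempty h) (fun b => f b x)) =
        fun x => (f a x) ⊔ (s.sup' hs (fun b => f b x)) := by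
      funext x
      rw [Finset.sup'_cons]
    rw [heq]
    exact (hf a (Finset.mem_cons_self a s)).sup
      (ih fun b hb => hf b (Finset.mem_cons_of_mem hb))

end FRBLaux

namespace FRBL

section Aux

variable {k m : ℕ}
  (E : Fin k → Type*) (F : Fin m → Type*)
  [∀ i, NormedAddCommGroup (E i)] [∀ i, InnerProductSpace ℝ (E i)]
  [∀ i, FiniteDimensional ℝ (E i)]
  [∀ j, NormedAddCommGroup (F j)] [∀ j, InnerProductSpace ℝ (F j)]
  [∀ j, FiniteDimensional ℝ (F j)]

set_option linter.unusedSectionVars false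

lemma projL_singleL (i : Fin k) (x : E i) : projL E i (singleL E i x) = x := by
  simp [projL, singleL, toPi]

lemma projL_singleL_ne {i i' : Fin k} (h : i' ≠ i) (x : E i') :
    projL E i (singleL E i' x) = 0 := by
  simp [projL, singleL, toPi, Pi.single_eq_of_ne (Ne.symm h)]

lemma inner_singleL (i : Fin k) (x y : E i) : ⟪singleL E i x, singleL E i y⟫ = ⟪x, y⟫ := by
  classical
  rw [PiLp.inner_apply]
  rw [Finset.sum_eq_single i]
  · simp [singleL, toPi]
  · intro b _ hb
    simp [singleL, toPi, Pi.single_eq_of_ne hb]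
  · simp

lemma projL_surj (i : Fin k) : Function.Surjective (projL E i) :=
  fun x => ⟨singleL E i x, projL_singleL E i x⟩

variable (c : Fin k → ℝ) (d : Fin m → ℝ) (B : ∀ i j, E i →ₗ[ℝ] F j)

open Classical in
/-- The finite set of positive gap values. -/
def gapSet : Finset ℝ :=
  (((Finset.univ : Finset ((∀ i, Fin (Module.finrank ℝ (E i) + 1)) ×
      (∀ j, Fin (Module.finrank ℝ (F j) + 1)))).image
    (fun p => ∑ j, d j * ((p.2 j : ℕ) : ℝ) - ∑ i, c i * ((p.1 i : ℕ) : ℝ))).filter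
      (fun x => 0 < x))

/-- The minimal positive gap between the two sides of the dimension condition. -/
def delta : ℝ := (insert (1 : ℝ) (gapSet E F c d)).min' (Finset.insert_nonempty _ _)

lemma delta_pos : 0 < delta E F c d := by
  classical
  have h : delta E F c d ∈ insert (1 : ℝ) (gapSet E F c d) :=
    Finset.min'_mem _ (Finset.insert_nonempty _ _)
  rcases Finset.mem_insert.1 h with h1 | h2
  · rw [h1]; norm_num
  · simp only [gapSet, Finset.mem_filter] at h2
    exact h2.2

lemma delta_le (s : Fin k → ℕ) (r : Fin m → ℕ)
    (hs : ∀ i, s i ≤ Module.finrank ℝ (E i)) (hr : ∀ j, r j ≤ Module.finrank ℝ (F j))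
    (hpos : 0 < ∑ j, d j * (r j : ℝ) - ∑ i, c i * (s i : ℝ)) :
    delta E F c d ≤ ∑ j, d j * (r j : ℝ) - ∑ i, c i * (s i : ℝ) := by
  classical
  apply Finset.min'_le
  apply Finset.mem_insert_of_mem
  simp only [gapSet, Finset.mem_filter, Finset.mem_image]
  refine ⟨⟨(fun i => ⟨s i, Nat.lt_succ_of_le (hs i)⟩,
    fun j => ⟨r j, Nat.lt_succ_of_le (hr j)⟩), Finset.mem_univ _, rfl⟩, hpos⟩

lemma Bop_surjective
    (hc : ∀ i, 0 < c i) (hd : ∀ j, 0 < d j)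
    (hscal : ScalingCond E F c d) (hdim : DimCond E F c d B) (j : Fin m) :
    LinearMap.range (Bop E F B j) = ⊤ := by
  have htopPF : ProductForm E (⊤ : Submodule ℝ (PiLp 2 E)) := fun x _ i => Submodule.mem_top
  have h1 := hdim ⊤ htopPF
  have hmapP : ∀ i, (⊤ : Submodule ℝ (PiLp 2 E)).map (projL E i) = ⊤ := by
    intro i
    rw [Submodule.map_top, LinearMap.range_eq_top]
    exact projL_surj E i
  have h1' : ∑ i, c i * (Module.finrank ℝ (E i) : ℝ) ≤
      ∑ j', d j' * (Module.finrank ℝ ((⊤ : Submodule ℝ (PiLp 2 E)).map (Bop E F B j')) : ℝ) := by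
    refine le_trans (le_of_eq ?_) h1
    refine Finset.sum_congr rfl fun i _ => ?_
    rw [hmapP i, finrank_top]
  have hle : ∀ j' : Fin m,
      d j' * (Module.finrank ℝ ((⊤ : Submodule ℝ (PiLp 2 E)).map (Bop E F B j')) : ℝ) ≤
        d j' * (Module.finrank ℝ (F j') : ℝ) := by
    intro j'
    refine mul_le_mul_of_nonneg_left ?_ (hd j').le
    exact_mod_cast Submodule.finrank_le _
  have hsums : ∑ j', d j' * (Module.finrank ℝ ((⊤ : Submodule ℝ (PiLp 2 E)).map (Bop E F B j')) : ℝ) =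
      ∑ j', d j' * (Module.finrank ℝ (F j') : ℝ) := by
    refine le_antisymm (Finset.sum_le_sum fun j' _ => hle j') ?_
    rw [← hscal]; exact h1'
  have hterm := (Finset.sum_eq_sum_iff_of_le (fun j' _ => hle j')).1 hsums j (Finset.mem_univ j)
  have hrank : Module.finrank ℝ ((⊤ : Submodule ℝ (PiLp 2 E)).map (Bop E F B j)) =
      Module.finrank ℝ (F j) := by
    have := mul_left_cancel₀ (ne_of_gt (hd j)) hterm
    exact_mod_cast this
  rw [Submodule.map_top] at hrank
  exact Submodule.eq_top_of_finrank_eq (by rw [hrank])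

theorem greedy
    (hc : ∀ i, 0 < c i) (hd : ∀ j, 0 < d j)
    (hscal : ScalingCond E F c d) (hdim : DimCond E F c d B)
    (v : Fin (Module.finrank ℝ (PiLp 2 E)) → PiLp 2 E) (hv : Orthonormal ℝ v)
    (ι : Fin (Module.finrank ℝ (PiLp 2 E)) → Fin k)
    (hι : ∀ n, v n ∈ LinearMap.range (singleL E (ι n))) :
    ∃ I : Fin m → Finset (Fin (Module.finrank ℝ (PiLp 2 E))),
      (∀ j, (I j).card = Module.finrank ℝ (F j)) ∧
      (∀ j, LinearIndependent ℝ (fun a : ↥(I j) => Bop E F B j (v ↑a))) ∧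
      (∀ n : ℕ,
        (∑ i, c i * ((Finset.univ.filter (fun a => ι a = i ∧ n ≤ (a : ℕ))).card : ℝ)) ≤
          ∑ j, d j * (((I j).filter (fun a => n ≤ a.val)).card : ℝ)) ∧
      (Simple E F c d B → ∀ n : ℕ, 0 < n → n < Module.finrank ℝ (PiLp 2 E) →
        (∑ i, c i * ((Finset.univ.filter (fun a => ι a = i ∧ n ≤ (a : ℕ))).card : ℝ)) +
            delta E F c d ≤
          ∑ j, d j * (((I j).filter (fun a => n ≤ a.val)).card : ℝ)) := by
  classical
  revert hι; revert hv; revert ι; revert v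
  generalize hN : Module.finrank ℝ (PiLp 2 E) = N
  intro v ι hv hι
  set w : ∀ j, Fin N → F j := fun j a => Bop E F B j (v a) with hw
  refine ⟨fun j => FRBLaux.gsel (w j), ?_⟩
  set I : Fin m → Finset (Fin N) := fun j => FRBLaux.gsel (w j) with hI
  -- the flag subspaces
  set T : ℕ → Submodule ℝ (PiLp 2 E) := fun n => Submodule.span ℝ (v '' {a : Fin N | n ≤ (a : ℕ)})
    with hT
  -- linear independence of the selected vectors
  have hindep : ∀ j (s : Finset (Fin N)), s ⊆ I j →
      LinearIndependent ℝ (fun a : ↥s => w j ↑a) := by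
    intro j s hs
    refine FRBLaux.gsel_indep (w j) s fun a ha => ?_
    exact (FRBLaux.mem_gsel_iff (w j) a).1 (hs ha)
  -- the B_j-dimension count
  have cardB : ∀ j n, (((I j).filter (fun a => n ≤ a.val)).card : ℕ) =
      Module.finrank ℝ ((T n).map (Bop E F B j)) := by
    intro j n
    set s2 := (I j).filter (fun a => n ≤ a.val) with hs2
    have hcoe : (↑s2 : Set (Fin N)) = {a : Fin N | n ≤ (a : ℕ) ∧ a ∈ FRBLaux.gsel (w j)} := by
      ext a
      simp only [hs2, Finset.coe_filter, Set.mem_setOf_eq, Finset.mem_coe]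
      tauto
    have hli : LinearIndependent ℝ (fun a : ↥s2 => w j ↑a) :=
      hindep j s2 (Finset.filter_subset _ _)
    have himg : w j '' (↑s2 : Set (Fin N)) = Set.range (fun a : ↥s2 => w j ↑a) :=
      Set.image_eq_range _ _
    have hmap : (T n).map (Bop E F B j) = Submodule.span ℝ (w j '' {a : Fin N | n ≤ (a : ℕ)}) := by
      simp only [hT]; rw [Submodule.map_span, Set.image_image]
    have hfr : Module.finrank ℝ (Submodule.span ℝ (w j '' (↑s2 : Set (Fin N)))) = s2.card := by
      rw [himg, finrank_span_eq_card hli, Fintype.card_coe]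
    rw [hmap, ← FRBLaux.gsel_span (w j) n, ← hcoe, hfr]
  -- single-block reconstruction
  have husingle : ∀ (i : Fin k) (a : Fin N), ι a = i →
      singleL E i (projL E i (v a)) = v a := by
    intro i a h
    obtain ⟨y, hy⟩ := hι a
    subst h
    rw [← hy, projL_singleL]
  have hu0 : ∀ (i : Fin k) (a : Fin N), ι a ≠ i → projL E i (v a) = 0 := by
    intro i a h
    obtain ⟨y, hy⟩ := hι a
    rw [← hy, projL_singleL_ne E h]
  -- orthonormality of the projected vectors within block i
  have horth : ∀ (i : Fin k) (s : Finset (Fin N)), (∀ a ∈ s, ι a = i) →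
      Orthonormal ℝ (fun a : ↥s => projL E i (v ↑a)) := by
    intro i s hs
    rw [orthonormal_iff_ite]
    intro a b
    have hinner : ⟪projL E i (v ↑a), projL E i (v ↑b)⟫ = ⟪v ↑a, v ↑b⟫ := by
      rw [← inner_singleL, husingle i ↑a (hs ↑a a.2), husingle i ↑b (hs ↑b b.2)]
    rw [hinner, orthonormal_iff_ite.1 hv ↑a ↑b]
    by_cases h : a = b
    · simp [h]
    · have h' : (↑a : Fin N) ≠ ↑b := fun hc' => h (Subtype.ext hc')
      simp [h, h']
  -- the projection dimension count
  have cardP : ∀ (i : Fin k) (n : ℕ),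
      ((Finset.univ.filter (fun a => ι a = i ∧ n ≤ (a : ℕ))).card : ℕ) =
        Module.finrank ℝ ((T n).map (projL E i)) := by
    intro i n
    set s1 := Finset.univ.filter (fun a : Fin N => ι a = i ∧ n ≤ (a : ℕ)) with hs1
    set u : Fin N → E i := fun a => projL E i (v a) with hu
    have hmap : (T n).map (projL E i) = Submodule.span ℝ (u '' {a : Fin N | n ≤ (a : ℕ)}) := by
      simp only [hT]; rw [Submodule.map_span, Set.image_image]
    have hspan : Submodule.span ℝ (u '' {a : Fin N | n ≤ (a : ℕ)}) =
        Submodule.span ℝ (u '' (↑s1 : Set (Fin N))) := by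
      apply le_antisymm
      · rw [Submodule.span_le]
        rintro z ⟨a, ha, rfl⟩
        by_cases hia : ι a = i
        · apply Submodule.subset_span
          refine ⟨a, ?_, rfl⟩
          simp only [hs1, Finset.coe_filter, Set.mem_setOf_eq, Finset.mem_univ, true_and]
          exact ⟨hia, ha⟩
        · rw [show u a = 0 from hu0 i a hia]
          exact Submodule.zero_mem _
      · apply Submodule.span_mono
        apply Set.image_mono
        intro a ha
        simp only [hs1, Finset.coe_filter, Set.mem_setOf_eq, Finset.mem_coe] at ha
        exact ha.2.2
    have hon : Orthonormal ℝ (fun a : ↥s1 => u ↑a) := by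
      apply horth i s1
      intro a ha
      exact ((Finset.mem_filter.1 ha).2).1
    have himg : u '' (↑s1 : Set (Fin N)) = Set.range (fun a : ↥s1 => u ↑a) :=
      Set.image_eq_range _ _
    rw [hmap, hspan, himg, finrank_span_eq_card hon.linearIndependent, Fintype.card_coe]
  -- product form
  have hPF : ∀ n, ProductForm E (T n) := by
    intro n x hx i
    have hmaple : (T n).map ((singleL E i) ∘ₗ (projL E i)) ≤ T n := by
      conv_lhs => simp only [hT]
      rw [Submodule.map_span, Submodule.span_le, Set.image_image]
      rintro z ⟨a, ha, rfl⟩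
      simp only [LinearMap.comp_apply, SetLike.mem_coe]
      by_cases hia : ι a = i
      · rw [husingle i a hia]
        exact Submodule.subset_span ⟨a, ha, rfl⟩
      · rw [hu0 i a hia, map_zero]
        exact Submodule.zero_mem _
    exact hmaple ⟨x, hx, rfl⟩
  -- the main inequality for every n
  have hineq : ∀ n : ℕ,
      (∑ i, c i * ((Finset.univ.filter (fun a => ι a = i ∧ n ≤ (a : ℕ))).card : ℝ)) ≤
        ∑ j, d j * (((I j).filter (fun a => n ≤ a.val)).card : ℝ) := by
    intro n
    have h := hdim (T n) (hPF n)
    calc (∑ i, c i * ((Finset.univ.filter (fun a => ι a = i ∧ n ≤ (a : ℕ))).card : ℝ))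
        = ∑ i, c i * (Module.finrank ℝ ((T n).map (projL E i)) : ℝ) := by
          refine Finset.sum_congr rfl fun i _ => ?_; rw [cardP i n]
      _ ≤ ∑ j, d j * (Module.finrank ℝ ((T n).map (Bop E F B j)) : ℝ) := h
      _ = ∑ j, d j * (((I j).filter (fun a => n ≤ a.val)).card : ℝ) := by
          refine Finset.sum_congr rfl fun j _ => ?_; rw [cardB j n]
  -- cardinality of I j
  have hcardI : ∀ j, (I j).card = Module.finrank ℝ (F j) := by
    intro j
    have h0 : (I j).filter (fun a => 0 ≤ a.val) = I j :=
      Finset.filter_true_of_mem fun a _ => Nat.zero_le _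
    have hT0 : T 0 = ⊤ := by
      simp only [hT]
      have : {a : Fin N | 0 ≤ (a : ℕ)} = Set.univ := by ext a; simp
      rw [this, Set.image_univ]
      rcases Nat.eq_zero_or_pos N with h0' | hpos
      · have hsub : Subsingleton (PiLp 2 E) :=
          Module.finrank_zero_iff.1 (hN.trans h0')
        exact Subsingleton.elim _ _
      · haveI : Nonempty (Fin N) := ⟨⟨0, hpos⟩⟩
        refine hv.linearIndependent.span_eq_top_of_card_eq_finrank ?_
        rw [Fintype.card_fin, hN]
    have := cardB j 0
    rw [h0, hT0, Submodule.map_top, Bop_surjective E F c d B hc hd hscal hdim j] at this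
    rw [this, finrank_top]
  refine ⟨hcardI, fun j => hindep j (I j) le_rfl, hineq, ?_⟩
  -- the simple (strict) case
  intro hsimple n hn0 hnN
  have hTbot : T n ≠ ⊥ := by
    intro h
    have hmem : v ⟨n, hnN⟩ ∈ T n :=
      Submodule.subset_span ⟨⟨n, hnN⟩, by simp, rfl⟩
    rw [h, Submodule.mem_bot] at hmem
    exact hv.ne_zero _ hmem
  have hTtop : T n ≠ ⊤ := by
    have hfr : Module.finrank ℝ (T n) < N := by
      set s := Finset.univ.filter (fun a : Fin N => n ≤ (a : ℕ)) with hs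
      have hcoe : v '' {a : Fin N | n ≤ (a : ℕ)} = ↑(s.image v) := by
        rw [Finset.coe_image]
        congr 1
        ext a; simp [hs]
      have h1 : Module.finrank ℝ (T n) ≤ (s.image v).card := by
        have hTeq : T n = Submodule.span ℝ ↑(s.image v) := by
          simp only [hT]; rw [hcoe]
        rw [hTeq]
        exact finrank_span_finset_le_card _
      have h2 : (s.image v).card ≤ s.card := Finset.card_image_le
      have h3 : s.card < N := by
        have hssub : s ⊂ Finset.univ := by
          refine Finset.ssubset_univ_iff.2 ?_
          intro h
          have : (⟨0, by omega⟩ : Fin N) ∈ s := h ▸ Finset.mem_univ _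
          simp only [hs, Finset.mem_filter] at this
          omega
        have := Finset.card_lt_card hssub
        rwa [Finset.card_univ, Fintype.card_fin] at this
      omega
    intro h
    rw [h, finrank_top, hN] at hfr
    exact lt_irrefl _ hfr
  have hne := hsimple (T n)
  rw [IsCritical] at hne
  push_neg at hne
  have hnecrit := hne hTbot hTtop (hPF n)
  have hstrict : (∑ i, c i * (Module.finrank ℝ ((T n).map (projL E i)) : ℝ)) <
      ∑ j, d j * (Module.finrank ℝ ((T n).map (Bop E F B j)) : ℝ) :=
    lt_of_le_of_ne (hdim (T n) (hPF n)) hnecrit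
  have hbound1 : ∀ i, (Finset.univ.filter (fun a => ι a = i ∧ n ≤ (a : ℕ))).card ≤
      Module.finrank ℝ (E i) := by
    intro i
    set s1 := Finset.univ.filter (fun a : Fin N => ι a = i ∧ n ≤ (a : ℕ)) with hs1
    have hon : Orthonormal ℝ (fun a : ↥s1 => projL E i (v ↑a)) := by
      apply horth i s1
      intro a ha
      exact ((Finset.mem_filter.1 ha).2).1
    have := hon.linearIndependent.fintype_card_le_finrank
    rwa [Fintype.card_coe] at this
  have hbound2 : ∀ j, ((I j).filter (fun a => n ≤ a.val)).card ≤
      Module.finrank ℝ (F j) := by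
    intro j
    rw [← hcardI j]
    exact Finset.card_filter_le _ _
  have hgap := delta_le E F c d
    (fun i => (Finset.univ.filter (fun a : Fin N => ι a = i ∧ n ≤ (a : ℕ))).card)
    (fun j => ((I j).filter (fun a : Fin N => n ≤ (a : ℕ))).card)
    hbound1 hbound2 ?hpos
  · linarith [hgap]
  case hpos =>
    have hL : (∑ i, c i * ((Finset.univ.filter (fun a => ι a = i ∧ n ≤ (a : ℕ))).card : ℝ))
        = ∑ i, c i * (Module.finrank ℝ ((T n).map (projL E i)) : ℝ) := by
      refine Finset.sum_congr rfl fun i _ => ?_; rw [cardP i n]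
    have hR : (∑ j, d j * (((I j).filter (fun a => n ≤ a.val)).card : ℝ))
        = ∑ j, d j * (Module.finrank ℝ ((T n).map (Bop E F B j)) : ℝ) := by
      refine Finset.sum_congr rfl fun j _ => ?_; rw [cardB j n]
    rw [hL, hR]
    linarith

lemma uniform {N : ℕ}
    (Q : (Fin N → Fin k) → (Fin m → Finset (Fin N)) → Prop)
    (hQ : ∀ (ι : Fin N → Fin k) (v : Fin N → PiLp 2 E), Orthonormal ℝ v →
      (∀ n, v n ∈ LinearMap.range (singleL E (ι n))) →
      ∃ I : Fin m → Finset (Fin N), Q ι I ∧ (∀ j, (I j).card = Module.finrank ℝ (F j)) ∧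
        (∀ j, LinearIndependent ℝ (fun a : ↥(I j) => Bop E F B j (v ↑a)))) :
    ∃ t : ℝ, 0 < t ∧ ∀ (ι : Fin N → Fin k) (v : Fin N → PiLp 2 E), Orthonormal ℝ v →
      (∀ n, v n ∈ LinearMap.range (singleL E (ι n))) →
      ∃ I : Fin m → Finset (Fin N), Q ι I ∧ (∀ j, (I j).card = Module.finrank ℝ (F j)) ∧
        ∀ j, t ≤ Matrix.det (Matrix.of
          (fun a b : ↥(I j) => ⟪Bop E F B j (v ↑a), Bop E F B j (v ↑b)⟫)) := by
  classical
  set P : (Fin N → PiLp 2 E) → (Fin m → Finset (Fin N)) → ℝ := fun v I =>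
    ∏ j, min 1 (Matrix.det (Matrix.of
      (fun a b : ↥(I j) => ⟪Bop E F B j (v ↑a), Bop E F B j (v ↑b)⟫))) with hP
  -- nonnegativity and positivity of the Gram determinants
  have f1 : ∀ (j : Fin m) (v : Fin N → PiLp 2 E) (s : Finset (Fin N)),
      s.card = Module.finrank ℝ (F j) →
      0 ≤ Matrix.det (Matrix.of
        (fun a b : ↥s => ⟪Bop E F B j (v ↑a), Bop E F B j (v ↑b)⟫)) := by
    intro j v s hs
    exact (FRBLaux.gram_lemma (fun a : ↥s => Bop E F B j (v ↑a))
      (by rw [Fintype.card_coe]; exact hs)).1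
  have f2 : ∀ (j : Fin m) (v : Fin N → PiLp 2 E) (s : Finset (Fin N)),
      s.card = Module.finrank ℝ (F j) →
      LinearIndependent ℝ (fun a : ↥s => Bop E F B j (v ↑a)) →
      0 < Matrix.det (Matrix.of
        (fun a b : ↥s => ⟪Bop E F B j (v ↑a), Bop E F B j (v ↑b)⟫)) := by
    intro j v s hs hli
    exact (FRBLaux.gram_lemma (fun a : ↥s => Bop E F B j (v ↑a))
      (by rw [Fintype.card_coe]; exact hs)).2 hli
  have f3 : ∀ (v : Fin N → PiLp 2 E) (I : Fin m → Finset (Fin N)),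
      (∀ j, (I j).card = Module.finrank ℝ (F j)) →
      (∀ j, LinearIndependent ℝ (fun a : ↥(I j) => Bop E F B j (v ↑a))) →
      0 < P v I := by
    intro v I hcards hli
    refine Finset.prod_pos fun j _ => ?_
    exact lt_min one_pos (f2 j v (I j) (hcards j) (hli j))
  have f4 : ∀ (v : Fin N → PiLp 2 E) (I : Fin m → Finset (Fin N)),
      (∀ j, (I j).card = Module.finrank ℝ (F j)) → ∀ j,
      P v I ≤ min 1 (Matrix.det (Matrix.of
        (fun a b : ↥(I j) => ⟪Bop E F B j (v ↑a), Bop E F B j (v ↑b)⟫))) := by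
    intro v I hcards j
    have hnn : ∀ j' : Fin m, 0 ≤ min 1 (Matrix.det (Matrix.of
        (fun a b : ↥(I j') => ⟪Bop E F B j' (v ↑a), Bop E F B j' (v ↑b)⟫))) :=
      fun j' => le_min zero_le_one (f1 j' v (I j') (hcards j'))
    have hle1 : ∀ j' : Fin m, min 1 (Matrix.det (Matrix.of
        (fun a b : ↥(I j') => ⟪Bop E F B j' (v ↑a), Bop E F B j' (v ↑b)⟫))) ≤ 1 :=
      fun j' => min_le_left _ _
    calc P v I = (min 1 (Matrix.det (Matrix.of
          (fun a b : ↥(I j) => ⟪Bop E F B j (v ↑a), Bop E F B j (v ↑b)⟫)))) *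
          ∏ j' ∈ Finset.univ.erase j, min 1 (Matrix.det (Matrix.of
            (fun a b : ↥(I j') => ⟪Bop E F B j' (v ↑a), Bop E F B j' (v ↑b)⟫))) :=
        (Finset.mul_prod_erase Finset.univ _ (Finset.mem_univ j)).symm
      _ ≤ (min 1 (Matrix.det (Matrix.of
          (fun a b : ↥(I j) => ⟪Bop E F B j (v ↑a), Bop E F B j (v ↑b)⟫)))) * 1 :=
        mul_le_mul_of_nonneg_left
          (Finset.prod_le_one (fun j' _ => hnn j') (fun j' _ => hle1 j')) (hnn j)
      _ = _ := mul_one _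
  have hcont : ∀ (I : Fin m → Finset (Fin N)), Continuous (fun v => P v I) := by
    intro I
    rw [hP]
    refine continuous_finset_prod _ fun j _ => Continuous.min continuous_const ?_
    refine Continuous.matrix_det (continuous_matrix fun a b => ?_)
    exact Continuous.inner
      (((Bop E F B j).continuous_of_finiteDimensional).comp (continuous_apply (↑a : Fin N)))
      (((Bop E F B j).continuous_of_finiteDimensional).comp (continuous_apply (↑b : Fin N)))
  -- per-ι uniform bound via compactness
  have hper : ∀ ι : Fin N → Fin k, ∃ t : ℝ, 0 < t ∧
      ∀ v : Fin N → PiLp 2 E, Orthonormal ℝ v →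
      (∀ n, v n ∈ LinearMap.range (singleL E (ι n))) →
      ∃ I : Fin m → Finset (Fin N), Q ι I ∧ (∀ j, (I j).card = Module.finrank ℝ (F j)) ∧
        ∀ j, t ≤ Matrix.det (Matrix.of
          (fun a b : ↥(I j) => ⟪Bop E F B j (v ↑a), Bop E F B j (v ↑b)⟫)) := by
    intro ι
    set K : Set (Fin N → PiLp 2 E) :=
      {v | Orthonormal ℝ v ∧ ∀ n, v n ∈ LinearMap.range (singleL E (ι n))} with hK
    by_cases hKne : K.Nonempty
    swap
    · exact ⟨1, one_pos, fun v hv hr => absurd ⟨v, hv, hr⟩ hKne⟩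
    set 𝓐 : Finset (Fin m → Finset (Fin N)) :=
      Finset.univ.filter (fun I => Q ι I ∧ ∀ j, (I j).card = Module.finrank ℝ (F j)) with h𝓐
    have h𝓐ne : 𝓐.Nonempty := by
      obtain ⟨v₀, hv₀⟩ := hKne
      obtain ⟨I₀, hQI₀, hcards₀, _⟩ := hQ ι v₀ hv₀.1 hv₀.2
      exact ⟨I₀, Finset.mem_filter.2 ⟨Finset.mem_univ _, hQI₀, hcards₀⟩⟩
    set G : (Fin N → PiLp 2 E) → ℝ := fun v => 𝓐.sup' h𝓐ne (fun I => P v I) with hG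
    have hGcont : Continuous G := FRBLaux.cont_sup' 𝓐 h𝓐ne (fun I v => P v I)
      (fun I _ => hcont I)
    have hKclosed : IsClosed K := by
      have hK1 : IsClosed {v : Fin N → PiLp 2 E | Orthonormal ℝ v} := by
        have heq : {v : Fin N → PiLp 2 E | Orthonormal ℝ v} =
            ⋂ a, ⋂ b, {v : Fin N → PiLp 2 E |
              (⟪v a, v b⟫ : ℝ) = if a = b then 1 else 0} := by
          ext v
          simp only [Set.mem_setOf_eq, Set.mem_iInter]
          exact orthonormal_iff_ite
        rw [heq]
        exact isClosed_iInter fun a => isClosed_iInter fun b =>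
          isClosed_eq (Continuous.inner (continuous_apply a) (continuous_apply b))
            continuous_const
      have hK2 : IsClosed {v : Fin N → PiLp 2 E | ∀ n, v n ∈ LinearMap.range (singleL E (ι n))} := by
        have heq : {v : Fin N → PiLp 2 E | ∀ n, v n ∈ LinearMap.range (singleL E (ι n))} =
            ⋂ n, (fun v : Fin N → PiLp 2 E => v n) ⁻¹'
              ((LinearMap.range (singleL E (ι n)) : Submodule ℝ (PiLp 2 E)) : Set (PiLp 2 E)) := by
          ext v
          simp only [Set.mem_setOf_eq, Set.mem_iInter, Set.mem_preimage, SetLike.mem_coe]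
        rw [heq]
        exact isClosed_iInter fun n =>
          ((LinearMap.range (singleL E (ι n))).closed_of_finiteDimensional).preimage
            (continuous_apply n)
      have : K = {v : Fin N → PiLp 2 E | Orthonormal ℝ v} ∩
          {v : Fin N → PiLp 2 E | ∀ n, v n ∈ LinearMap.range (singleL E (ι n))} := by
        ext v; simp [hK, Set.mem_setOf_eq]
      rw [this]
      exact hK1.inter hK2
    have hKbdd : Bornology.IsBounded K := by
      refine (Metric.isBounded_closedBall (x := (0 : Fin N → PiLp 2 E)) (r := 1)).subset ?_
      intro v hv
      rw [Metric.mem_closedBall, dist_zero_right]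
      refine (pi_norm_le_iff_of_nonneg zero_le_one).2 fun n => ?_
      rw [hv.1.1 n]
    have hKcompact : IsCompact K := Metric.isCompact_of_isClosed_isBounded hKclosed hKbdd
    obtain ⟨v₁, hv₁K, hminG⟩ := hKcompact.exists_isMinOn hKne hGcont.continuousOn
    obtain ⟨I₁, hQI₁, hcards₁, hli₁⟩ := hQ ι v₁ hv₁K.1 hv₁K.2
    have hI₁𝓐 : I₁ ∈ 𝓐 := Finset.mem_filter.2 ⟨Finset.mem_univ _, hQI₁, hcards₁⟩
    have htpos : 0 < G v₁ :=
      lt_of_lt_of_le (f3 v₁ I₁ hcards₁ hli₁) (Finset.le_sup' _ hI₁𝓐)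
    refine ⟨G v₁, htpos, fun v hv hr => ?_⟩
    have hvK : v ∈ K := ⟨hv, hr⟩
    obtain ⟨I, hI𝓐, hsup⟩ := Finset.exists_mem_eq_sup' h𝓐ne (fun I => P v I)
    have hIQ := (Finset.mem_filter.1 hI𝓐).2
    refine ⟨I, hIQ.1, hIQ.2, fun j => ?_⟩
    have h5 : G v₁ ≤ G v := hminG hvK
    have h6 : G v = P v I := hsup
    have h7 := f4 v I hIQ.2 j
    calc G v₁ ≤ G v := h5
      _ = P v I := h6
      _ ≤ _ := h7
      _ ≤ _ := min_le_right _ _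
  choose tf htf1 htf2 using hper
  have hne : (insert (1 : ℝ) (Finset.univ.image tf)).Nonempty := Finset.insert_nonempty _ _
  set t := (insert (1 : ℝ) (Finset.univ.image tf)).min' hne with ht
  have htpos : 0 < t := by
    have hmem := Finset.min'_mem _ hne
    rw [← ht] at hmem
    rcases Finset.mem_insert.1 hmem with h1 | h2
    · rw [h1]; norm_num
    · obtain ⟨ι, _, hι⟩ := Finset.mem_image.1 h2
      rw [← hι]; exact htf1 ι
  refine ⟨t, htpos, fun ι v hv hr => ?_⟩
  obtain ⟨I, hQI, hcards, hdet⟩ := htf2 ι v hv hr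
  refine ⟨I, hQI, hcards, fun j => le_trans ?_ (hdet j)⟩
  exact Finset.min'_le _ _ (Finset.mem_insert_of_mem (Finset.mem_image_of_mem tf (Finset.mem_univ ι)))

end Aux

end FRBL

namespace FRBL

variable {k m : ℕ}
  (E : Fin k → Type*) (F : Fin m → Type*)
  [∀ i, NormedAddCommGroup (E i)] [∀ i, InnerProductSpace ℝ (E i)]
  [∀ i, FiniteDimensional ℝ (E i)]
  [∀ i, MeasurableSpace (E i)] [∀ i, BorelSpace (E i)]
  [∀ j, NormedAddCommGroup (F j)] [∀ j, InnerProductSpace ℝ (F j)]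
  [∀ j, FiniteDimensional ℝ (F j)]
  [∀ j, MeasurableSpace (F j)] [∀ j, BorelSpace (F j)]

/-- **Lemma (basis selection).** -/
theorem basis_selection
    (c : Fin k → ℝ) (d : Fin m → ℝ) (B : ∀ i j, E i →ₗ[ℝ] F j)
    (hc : ∀ i, 0 < c i) (hd : ∀ j, 0 < d j)
    (hscal : ScalingCond E F c d) (hdim : DimCond E F c d B) :
    (∃ c₀ : ℝ, 0 < c₀ ∧
      ∀ (e : OrthonormalBasis (Fin (Module.finrank ℝ (PiLp 2 E))) ℝ (PiLp 2 E))
        (ι : Fin (Module.finrank ℝ (PiLp 2 E)) → Fin k),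
        (∀ n, e n ∈ LinearMap.range (singleL E (ι n))) →
        ∃ I : Fin m → Finset (Fin (Module.finrank ℝ (PiLp 2 E))),
          (∀ j, (I j).card = Module.finrank ℝ (F j)) ∧
          (∀ n : ℕ, n ≤ Module.finrank ℝ (PiLp 2 E) →
            (∑ i, c i *
              ((Finset.univ.filter (fun a => ι a = i ∧ n ≤ (a : ℕ))).card : ℝ)) ≤
              ∑ j, d j * (((I j).filter (fun a => n ≤ a.val)).card : ℝ)) ∧
          (∀ j, c₀ ^ 2 ≤ Matrix.det (Matrix.of
            (fun a b : ↥(I j) => ⟪Bop E F B j (e a), Bop E F B j (e b)⟫)))) ∧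
    (Simple E F c d B →
      ∃ c₀ : ℝ, 0 < c₀ ∧ ∃ δ : ℝ, 0 < δ ∧
      ∀ (e : OrthonormalBasis (Fin (Module.finrank ℝ (PiLp 2 E))) ℝ (PiLp 2 E))
        (ι : Fin (Module.finrank ℝ (PiLp 2 E)) → Fin k),
        (∀ n, e n ∈ LinearMap.range (singleL E (ι n))) →
        ∃ I : Fin m → Finset (Fin (Module.finrank ℝ (PiLp 2 E))),
          (∀ j, (I j).card = Module.finrank ℝ (F j)) ∧
          (∀ n : ℕ, n ≤ Module.finrank ℝ (PiLp 2 E) →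
            (∑ i, c i *
              ((Finset.univ.filter (fun a => ι a = i ∧ n ≤ (a : ℕ))).card : ℝ)) ≤
              ∑ j, d j * (((I j).filter (fun a => n ≤ a.val)).card : ℝ)) ∧
          (∀ n : ℕ, 0 < n → n < Module.finrank ℝ (PiLp 2 E) →
            (∑ i, c i *
              ((Finset.univ.filter (fun a => ι a = i ∧ n ≤ (a : ℕ))).card : ℝ)) + δ ≤
              ∑ j, d j * (((I j).filter (fun a => n ≤ a.val)).card : ℝ)) ∧
          (∀ j, c₀ ^ 2 ≤ Matrix.det (Matrix.of
            (fun a b : ↥(I j) => ⟪Bop E F B j (e a), Bop E F B j (e b)⟫)))) := by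
  constructor
  · -- Part 1
    obtain ⟨t, ht, hmain⟩ := uniform E F B
      (Q := fun ι I => ∀ n : ℕ,
        (∑ i, c i * ((Finset.univ.filter (fun a => ι a = i ∧ n ≤ (a : ℕ))).card : ℝ)) ≤
          ∑ j, d j * (((I j).filter (fun a => n ≤ a.val)).card : ℝ))
      (fun ι v hv hr => by
        obtain ⟨I, hcards, hli, hineq, _⟩ := greedy E F c d B hc hd hscal hdim v hv ι hr
        exact ⟨I, hineq, hcards, hli⟩)
    refine ⟨Real.sqrt t, Real.sqrt_pos.2 ht, fun e ι he => ?_⟩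
    obtain ⟨I, hQI, hcards, hdet⟩ := hmain ι ⇑e e.orthonormal he
    refine ⟨I, hcards, fun n _ => hQI n, fun j => ?_⟩
    rw [Real.sq_sqrt ht.le]
    exact hdet j
  · -- Part 2
    intro hsimple
    obtain ⟨t, ht, hmain⟩ := uniform E F B
      (Q := fun ι I =>
        (∀ n : ℕ,
          (∑ i, c i * ((Finset.univ.filter (fun a => ι a = i ∧ n ≤ (a : ℕ))).card : ℝ)) ≤
            ∑ j, d j * (((I j).filter (fun a => n ≤ a.val)).card : ℝ)) ∧
        (∀ n : ℕ, 0 < n → n < Module.finrank ℝ (PiLp 2 E) →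
          (∑ i, c i * ((Finset.univ.filter (fun a => ι a = i ∧ n ≤ (a : ℕ))).card : ℝ)) +
              delta E F c d ≤
            ∑ j, d j * (((I j).filter (fun a => n ≤ a.val)).card : ℝ)))
      (fun ι v hv hr => by
        obtain ⟨I, hcards, hli, hineq, hstrict⟩ := greedy E F c d B hc hd hscal hdim v hv ι hr
        exact ⟨I, ⟨hineq, hstrict hsimple⟩, hcards, hli⟩)
    refine ⟨Real.sqrt t, Real.sqrt_pos.2 ht, delta E F c d, delta_pos E F c d,
      fun e ι he => ?_⟩
    obtain ⟨I, hQI, hcards, hdet⟩ := hmain ι ⇑e e.orthonormal he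
    refine ⟨I, hcards, fun n _ => hQI.1 n, fun n hn0 hnN => hQI.2 n hn0 hnN, fun j => ?_⟩
    rw [Real.sq_sqrt ht.le]
    exact hdet j

end FRBL
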